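/- arXiv:2409.09341 — 2 statements merged into one kernel-verified Lean document; each statement's English description precedes it below -/
import Mathlib

section
/- Let f be a 3×3 real matrix (second-order tensor on ℝ³) that is trace-free (f₁₁ + f₂₂ + f₃₃ = 0) and satisfies ξⁱ f_{ij} = 0 for a fixed nonzero vector ξ ∈ ℝ³. Suppose there exist angles α₁, α₂, α₃ ∈ ℝ with αᵢ ≠ αⱼ + nπ for all integers n and i ≠ j, and an angle β₁, such that with ω_q = (sin α_q cos β₁, sin α_q sin β₁, cos α_q), (ω_q)_α = (cos α_q cos β₁, cos α_q sin β₁, −sin α_q), (ω_q)_β = (−sin β₁, cos β₁, 0), and with ξ proportional to (−sin β₁, cos β₁, 0), the conditions ω_qⁱ (ω_q)_αʲ f_{ij} = 0 for q = 1,2,3 and ω_qⁱ (ω_q)_βʲ f_{ij} = 0 for q = 1,2,3 hold. Then f = 0. -/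
open Real Finset

/-- Ellipticity of the principal symbol of the normal operator of the restricted
mixed ray transform on 2-tensor fields in ℝ³. -/
theorem stmt_0
    (f : Matrix (Fin 3) (Fin 3) ℝ) (α : Fin 3 → ℝ) (β c : ℝ)
    (ω ωα : Fin 3 → Fin 3 → ℝ) (ωβ ξ : Fin 3 → ℝ)
    (hω : ω = fun q => ![Real.sin (α q) * Real.cos β, Real.sin (α q) * Real.sin β,
      Real.cos (α q)])
    (hωα : ωα = fun q => ![Real.cos (α q) * Real.cos β, Real.cos (α q) * Real.sin β,
      -Real.sin (α q)])
    (hωβ : ωβ = ![-Real.sin β, Real.cos β, 0])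
    (hξ : ξ = c • ωβ) (hc : c ≠ 0)
    (hα : ∀ i j : Fin 3, i ≠ j → ∀ n : ℤ, α i ≠ α j + n * Real.pi)
    (htrace : f 0 0 + f 1 1 + f 2 2 = 0)
    (hdiv : ∀ j : Fin 3, ∑ i, ξ i * f i j = 0)
    (h1 : ∀ q : Fin 3, ∑ i, ∑ j, ω q i * ωα q j * f i j = 0)
    (h2 : ∀ q : Fin 3, ∑ i, ∑ j, ω q i * ωβ j * f i j = 0) :
    f = 0 := by
  subst hω hωα hωβ hξ
  -- nonvanishing of sin of differences
  have hs : ∀ i j : Fin 3, i ≠ j → Real.sin (α i - α j) ≠ 0 := by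
    intro i j hij h
    rcases Real.sin_eq_zero_iff.mp h with ⟨n, hn⟩
    exact hα i j hij n (by linarith)
  have p01 : Real.sin (α 0) * Real.cos (α 1) - Real.cos (α 0) * Real.sin (α 1) ≠ 0 := by
    have := hs 0 1 (by decide); rwa [Real.sin_sub] at this
  have p12 : Real.sin (α 1) * Real.cos (α 2) - Real.cos (α 1) * Real.sin (α 2) ≠ 0 := by
    have := hs 1 2 (by decide); rwa [Real.sin_sub] at this
  have p02 : Real.sin (α 0) * Real.cos (α 2) - Real.cos (α 0) * Real.sin (α 2) ≠ 0 := by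
    have := hs 0 2 (by decide); rwa [Real.sin_sub] at this
  simp only [Fin.sum_univ_three, Matrix.cons_val_zero, Matrix.cons_val_one, Matrix.head_cons,
    Matrix.cons_val_two, Matrix.tail_cons, Pi.smul_apply, smul_eq_mul] at hdiv h1 h2
  set s := Real.sin β with hsdef
  set cb := Real.cos β with hcbdef
  set s0 := Real.sin (α 0) with hs0
  set c0 := Real.cos (α 0) with hc0
  set s1 := Real.sin (α 1) with hs1
  set c1 := Real.cos (α 1) with hc1
  set s2 := Real.sin (α 2) with hs2
  set c2 := Real.cos (α 2) with hc2
  have pyb : s ^ 2 + cb ^ 2 = 1 := Real.sin_sq_add_cos_sq β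
  have e10 := h1 0; have e11 := h1 1; have e12 := h1 2
  have e20 := h2 0; have e21 := h2 1; have e22 := h2 2
  -- divergence divided by c
  have hd : ∀ j : Fin 3, -s * f 0 j + cb * f 1 j = 0 := by
    intro j
    have h := hdiv j
    have : c * (-s * f 0 j + cb * f 1 j) = 0 := by linear_combination h
    exact (mul_eq_zero.mp this).resolve_left hc
  have hd0 := hd 0; have hd1 := hd 1; have hd2 := hd 2
  -- Z = u f u = 0
  have hZ : s ^ 2 * f 0 0 - s * cb * f 0 1 - s * cb * f 1 0 + cb ^ 2 * f 1 1 = 0 := by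
    linear_combination (-s) * hd0 + cb * hd1
  -- from h2 with q=0,1: X and Y
  have hX : (cb * (-s * f 0 0 + cb * f 0 1) + s * (-s * f 1 0 + cb * f 1 1))
      * (s0 * c1 - c0 * s1) = 0 := by
    linear_combination c1 * e20 - c0 * e21
  have hY : (-s * f 2 0 + cb * f 2 1) * (s0 * c1 - c0 * s1) = 0 := by
    linear_combination -(s1 * e20) + s0 * e21
  have hX' : cb * (-s * f 0 0 + cb * f 0 1) + s * (-s * f 1 0 + cb * f 1 1) = 0 :=
    (mul_eq_zero.mp hX).resolve_right p01
  have hw2 : -s * f 2 0 + cb * f 2 1 = 0 := (mul_eq_zero.mp hY).resolve_right p01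
  have hw0 : -s * f 0 0 + cb * f 0 1 = 0 := by
    linear_combination cb * hX' - s * hZ - (-s * f 0 0 + cb * f 0 1) * pyb
  have hw1 : -s * f 1 0 + cb * f 1 1 = 0 := by
    linear_combination s * hX' + cb * hZ - (-s * f 1 0 + cb * f 1 1) * pyb
  -- h1 Cramer analysis
  have hPM : (cb ^ 2 * f 0 0 + cb * s * f 0 1 + s * cb * f 1 0 + s ^ 2 * f 1 1 - f 2 2)
      * ((s0 * c1 - c0 * s1) * (s1 * c2 - c1 * s2) * (s0 * c2 - c0 * s2)) = 0 := by
    linear_combination (-(c1 ^ 2 * (-s2 ^ 2) - (-s1 ^ 2) * c2 ^ 2)) * e10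
      + (c0 ^ 2 * (-s2 ^ 2) - (-s0 ^ 2) * c2 ^ 2) * e11
      + (-(c0 ^ 2 * (-s1 ^ 2) - (-s0 ^ 2) * c1 ^ 2)) * e12
  have hBM : (cb * f 2 0 + s * f 2 1)
      * ((s0 * c1 - c0 * s1) * (s1 * c2 - c1 * s2) * (s0 * c2 - c0 * s2)) = 0 := by
    linear_combination (s1 * c1 * (-s2 ^ 2) - (-s1 ^ 2) * s2 * c2) * e10
      + (-(s0 * c0 * (-s2 ^ 2) - (-s0 ^ 2) * s2 * c2)) * e11
      + (s0 * c0 * (-s1 ^ 2) - (-s0 ^ 2) * s1 * c1) * e12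
  have hCM : (cb * f 0 2 + s * f 1 2)
      * ((s0 * c1 - c0 * s1) * (s1 * c2 - c1 * s2) * (s0 * c2 - c0 * s2)) = 0 := by
    linear_combination (-(s1 * c1 * c2 ^ 2 - c1 ^ 2 * s2 * c2)) * e10
      + (s0 * c0 * c2 ^ 2 - c0 ^ 2 * s2 * c2) * e11
      + (-(s0 * c0 * c1 ^ 2 - c0 ^ 2 * s1 * c1)) * e12
  have hMne : (s0 * c1 - c0 * s1) * (s1 * c2 - c1 * s2) * (s0 * c2 - c0 * s2) ≠ 0 :=
    mul_ne_zero (mul_ne_zero p01 p12) p02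
  have hAD : cb ^ 2 * f 0 0 + cb * s * f 0 1 + s * cb * f 1 0 + s ^ 2 * f 1 1 - f 2 2 = 0 :=
    (mul_eq_zero.mp hPM).resolve_right hMne
  have hB : cb * f 2 0 + s * f 2 1 = 0 := (mul_eq_zero.mp hBM).resolve_right hMne
  have hC : cb * f 0 2 + s * f 1 2 = 0 := (mul_eq_zero.mp hCM).resolve_right hMne
  -- now solve for all entries
  have h20 : f 2 0 = 0 := by linear_combination cb * hB - s * hw2 - f 2 0 * pyb
  have h21 : f 2 1 = 0 := by linear_combination s * hB + cb * hw2 - f 2 1 * pyb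
  have h02 : f 0 2 = 0 := by linear_combination cb * hC - s * hd2 - f 0 2 * pyb
  have h12 : f 1 2 = 0 := by linear_combination s * hC + cb * hd2 - f 1 2 * pyb
  have h22 : f 2 2 = 0 := by
    linear_combination (1/2 : ℝ) * htrace - (1/2 : ℝ) * hAD - (1/2 : ℝ) * hZ
      + (1/2 : ℝ) * (f 0 0 + f 1 1) * pyb
  have h00 : f 0 0 = 0 := by
    linear_combination (-s) * hw0 - cb * hd1 + cb ^ 2 * htrace - cb ^ 2 * h22 - f 0 0 * pyb
  have h11 : f 1 1 = 0 := by linear_combination htrace - h00 - h22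
  have h01 : f 0 1 = 0 := by
    linear_combination cb * hw0 - s * hd1 - f 0 1 * pyb + s * cb * h00 + s * cb * h11
  have h10 : f 1 0 = 0 := by
    linear_combination cb * hd0 - s * hw1 - f 1 0 * pyb + s * cb * h00 + s * cb * h11
  funext i j
  fin_cases i <;> fin_cases j <;>
    simp only [Matrix.zero_apply] <;> assumption
end

section
/- Let ω₁, ω₂, ω₃ be three pairwise linearly independent unit vectors lying in a common plane H ⊂ ℝ³ with unit normal ν, where ω_q = (sin α_q cos β, sin α_q sin β, cos α_q), (ω_q)_α = (cos α_q cos β, cos α_q sin β, −sin α_q), (ω_q)_β = (−sin β, cos β, 0) = ν. Then the five 3×3 matrices ω₁ ⊗ (ω₁)_α, ω₂ ⊗ (ω₂)_α, ω₃ ⊗ (ω₃)_α, ω₁ ⊗ (ω₁)_β, ω₂ ⊗ (ω₂)_β are linearly independent in the 9-dimensional space of 3×3 real matrices, provided α_i − α_j ∉ πℤ for i ≠ j. -/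
open Real Matrix

/-- The five rank-one tensors `ω_q ⊗ (ω_q)_α` (q = 1,2,3) and `ω_q ⊗ (ω_q)_β` (q = 1,2)
are linearly independent in the space of 3×3 matrices. -/
theorem stmt_10 (α : Fin 3 → ℝ) (β : ℝ)
    (ω ωα : Fin 3 → Fin 3 → ℝ) (ωβ : Fin 3 → ℝ)
    (hω : ω = fun q => ![Real.sin (α q) * Real.cos β, Real.sin (α q) * Real.sin β,
      Real.cos (α q)])
    (hωα : ωα = fun q => ![Real.cos (α q) * Real.cos β, Real.cos (α q) * Real.sin β,
      -Real.sin (α q)])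
    (hωβ : ωβ = ![-Real.sin β, Real.cos β, 0])
    (hα : ∀ i j : Fin 3, i ≠ j → ∀ n : ℤ, α i - α j ≠ n * Real.pi) :
    LinearIndependent ℝ
      ![vecMulVec (ω 0) (ωα 0), vecMulVec (ω 1) (ωα 1), vecMulVec (ω 2) (ωα 2),
        vecMulVec (ω 0) ωβ, vecMulVec (ω 1) ωβ] := by
  subst hω hωα hωβ
  rw [Fintype.linearIndependent_iff]
  intro g hg
  have h := Matrix.ext_iff.mpr hg
  simp only [Fin.sum_univ_five, Matrix.cons_val_zero, Matrix.cons_val_one, Matrix.head_cons,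
    Matrix.cons_val_two, Matrix.tail_cons, Matrix.cons_val_three, Matrix.cons_val_four,
    Matrix.add_apply, Matrix.smul_apply, vecMulVec_apply, smul_eq_mul, Matrix.zero_apply] at h
  have h00 := h 0 0
  have h01 := h 0 1
  have h02 := h 0 2
  have h10 := h 1 0
  have h11 := h 1 1
  have h12 := h 1 2
  have h20 := h 2 0
  have h21 := h 2 1
  simp only [Matrix.cons_val_zero, Matrix.cons_val_one, Matrix.head_cons, Matrix.cons_val_two,
    Matrix.tail_cons] at h00 h01 h02 h10 h11 h12 h20 h21
  set sb := Real.sin β with hsb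
  set cb := Real.cos β with hcb
  set s0 := Real.sin (α 0) with hs0
  set s1 := Real.sin (α 1) with hs1
  set s2 := Real.sin (α 2) with hs2
  set c0 := Real.cos (α 0) with hc0
  set c1 := Real.cos (α 1) with hc1
  set c2 := Real.cos (α 2) with hc2
  have hpy : sb ^ 2 + cb ^ 2 = 1 := Real.sin_sq_add_cos_sq β
  have hne : ∀ i j : Fin 3, i ≠ j →
      Real.sin (α i) * Real.cos (α j) - Real.cos (α i) * Real.sin (α j) ≠ 0 := by
    intro i j hij hcon
    have hz : Real.sin (α i - α j) = 0 := by rw [Real.sin_sub]; linarith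
    rcases Real.sin_eq_zero_iff.mp hz with ⟨n, hn⟩
    exact hα i j hij n hn.symm
  have hne01 : s0 * c1 - c0 * s1 ≠ 0 := hne 0 1 (by decide)
  have hne10 : s1 * c0 - c1 * s0 ≠ 0 := hne 1 0 (by decide)
  have hne02 : s0 * c2 - c0 * s2 ≠ 0 := hne 0 2 (by decide)
  have hne20 : s2 * c0 - c2 * s0 ≠ 0 := hne 2 0 (by decide)
  have hne12 : s1 * c2 - c1 * s2 ≠ 0 := hne 1 2 (by decide)
  have hne21 : s2 * c1 - c2 * s1 ≠ 0 := hne 2 1 (by decide)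
  -- contracted scalar equations
  have hA : g 3 * s0 + g 4 * s1 = 0 := by
    linear_combination (-(cb * sb)) * h00 + (cb * cb) * h01 + (-(sb * sb)) * h10 +
      (sb * cb) * h11 - (g 3 * s0 + g 4 * s1) * (sb ^ 2 + cb ^ 2 + 1) * hpy
  have hB : g 3 * c0 + g 4 * c1 = 0 := by
    linear_combination (-sb) * h20 + cb * h21 - (g 3 * c0 + g 4 * c1) * hpy
  have hC : g 0 * (s0 * c0) + g 1 * (s1 * c1) + g 2 * (s2 * c2) = 0 := by
    linear_combination (cb * cb) * h00 + (cb * sb) * h01 + (sb * cb) * h10 + (sb * sb) * h11 -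
      (g 0 * (s0 * c0) + g 1 * (s1 * c1) + g 2 * (s2 * c2)) * (sb ^ 2 + cb ^ 2 + 1) * hpy
  have hD : g 0 * s0 ^ 2 + g 1 * s1 ^ 2 + g 2 * s2 ^ 2 = 0 := by
    linear_combination (-cb) * h02 + (-sb) * h12 -
      (g 0 * s0 ^ 2 + g 1 * s1 ^ 2 + g 2 * s2 ^ 2) * hpy
  have hE : g 0 * c0 ^ 2 + g 1 * c1 ^ 2 + g 2 * c2 ^ 2 = 0 := by
    linear_combination cb * h20 + sb * h21 -
      (g 0 * c0 ^ 2 + g 1 * c1 ^ 2 + g 2 * c2 ^ 2) * hpy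
  have hg3 : g 3 = 0 := by
    have := mul_eq_zero.mp (show g 3 * (s0 * c1 - c0 * s1) = 0 by
      linear_combination c1 * hA - s1 * hB)
    tauto
  have hg4 : g 4 = 0 := by
    have := mul_eq_zero.mp (show g 4 * (s1 * c0 - c1 * s0) = 0 by
      linear_combination c0 * hA - s0 * hB)
    tauto
  have hg0 : g 0 = 0 := by
    have h0 : g 0 * ((s0 * c1 - c0 * s1) * ((s0 * c2 - c0 * s2) * (c1 * s2 - s1 * c2))) = 0 := by
      linear_combination (s1 ^ 2 * c2 ^ 2 - c1 ^ 2 * s2 ^ 2) * hC +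
        (c1 * c2 * (c1 * s2 - s1 * c2)) * hD + (s1 * s2 * (c1 * s2 - s1 * c2)) * hE
    rcases mul_eq_zero.mp h0 with h' | h'
    · exact h'
    rcases mul_eq_zero.mp h' with h'' | h''
    · exact absurd h'' hne01
    rcases mul_eq_zero.mp h'' with h3 | h3
    · exact absurd h3 hne02
    · exact absurd (by linarith : s2 * c1 - c2 * s1 = 0) hne21
  have hg1 : g 1 = 0 := by
    have h1 : g 1 * ((s1 * c0 - c1 * s0) * ((s1 * c2 - c1 * s2) * (c0 * s2 - s0 * c2))) = 0 := by
      linear_combination (s0 ^ 2 * c2 ^ 2 - c0 ^ 2 * s2 ^ 2) * hC +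
        (c0 * c2 * (c0 * s2 - s0 * c2)) * hD + (s0 * s2 * (c0 * s2 - s0 * c2)) * hE
    rcases mul_eq_zero.mp h1 with h' | h'
    · exact h'
    rcases mul_eq_zero.mp h' with h'' | h''
    · exact absurd h'' hne10
    rcases mul_eq_zero.mp h'' with h3 | h3
    · exact absurd h3 hne12
    · exact absurd (by linarith : s2 * c0 - c2 * s0 = 0) hne20
  have hg2 : g 2 = 0 := by
    have h2 : g 2 * ((s2 * c1 - c2 * s1) * ((s2 * c0 - c2 * s0) * (c1 * s0 - s1 * c0))) = 0 := by
      linear_combination (s1 ^ 2 * c0 ^ 2 - c1 ^ 2 * s0 ^ 2) * hC +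
        (c1 * c0 * (c1 * s0 - s1 * c0)) * hD + (s1 * s0 * (c1 * s0 - s1 * c0)) * hE
    rcases mul_eq_zero.mp h2 with h' | h'
    · exact h'
    rcases mul_eq_zero.mp h' with h'' | h''
    · exact absurd h'' hne21
    rcases mul_eq_zero.mp h'' with h3 | h3
    · exact absurd h3 hne20
    · exact absurd (by linarith : s1 * c0 - c1 * s0 = 0) hne10
  intro i
  fin_cases i <;> assumption
end
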